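/- For tropical polynomials f, g in the tropical semiring of Laurent polynomials, the tropical variety of the product satisfies V(f ⊙ g) = V(f) ∪ V(g), where V(h) is the set of points at which the minimum defining h is attained at least twice (or equals ∞). -/

import Mathlib

open scoped Classical

/-- The tropical semiring `ℝ ∪ {∞}` with `⊕ = min` and `⊙ = +`. -/
abbrev TropR : Type := Tropical (WithTop ℝ)

/-- The semiring of tropical Laurent polynomials in `n` variables: formal tropical sums
`⊕ a_u ⊙ x^u` with `u ∈ ℤⁿ`, with coefficientwise `min` as addition and min-plus
convolution as multiplication. -/
abbrev TropLaurent (n : ℕ) : Type := AddMonoidAlgebra TropR (Fin n → ℤ)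

/-- The value `a_u + w·u` of the term of `f` with exponent `u` at the point `w ∈ ℝⁿ`. -/
noncomputable def termVal {n : ℕ} (f : TropLaurent n) (w : Fin n → ℝ) (u : Fin n → ℤ) :
    WithTop ℝ :=
  (f.coeff u).untrop + ((∑ i, (u i : ℝ) * w i : ℝ) : WithTop ℝ)

/-- `f(w) = min_u (a_u + w·u)` (which is `∞` when `f` has no terms). -/
noncomputable def tropEval {n : ℕ} (f : TropLaurent n) (w : Fin n → ℝ) : WithTop ℝ :=
  f.coeff.support.inf (termVal f w)

/-- The tropical variety of `f`: points where `f(w) = ∞` or the minimum defining `f(w)`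
is attained by at least two distinct terms. -/
noncomputable def tropV {n : ℕ} (f : TropLaurent n) : Set (Fin n → ℝ) :=
  {w | tropEval f w = ⊤ ∨
    ∃ u v : Fin n → ℤ, u ≠ v ∧ termVal f w u = tropEval f w ∧ termVal f w v = tropEval f w}

lemma termVal_of_not_mem {n : ℕ} {f : TropLaurent n} {u : Fin n → ℤ} (w : Fin n → ℝ)
    (h : u ∉ f.coeff.support) : termVal f w u = ⊤ := by
  simp only [Finsupp.notMem_support_iff] at h
  simp [termVal, h, ← WithTop.coe_eq_coe]

lemma inner_add {n : ℕ} (a b : Fin n → ℤ) (w : Fin n → ℝ) :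
    (∑ i, ((a + b) i : ℝ) * w i : ℝ) = (∑ i, (a i : ℝ) * w i) + ∑ i, (b i : ℝ) * w i := by
  rw [← Finset.sum_add_distrib]
  congr 1; ext i
  simp [Pi.add_apply]
  ring

lemma termVal_mul_apply {n : ℕ} (f g : TropLaurent n) (w : Fin n → ℝ) (a b : Fin n → ℤ)
    (h : (f * g).coeff (a + b) = f.coeff a * g.coeff b) :
    termVal (f * g) w (a + b) = termVal f w a + termVal g w b := by
  simp only [termVal, h, Tropical.untrop_mul, inner_add a b w, WithTop.coe_add]
  abel

lemma mul_apply_prod {n : ℕ} (f g : TropLaurent n) (u : Fin n → ℤ) :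
    (f * g).coeff u = ∑ p ∈ f.coeff.support ×ˢ g.coeff.support,
      if p.1 + p.2 = u then f.coeff p.1 * g.coeff p.2 else 0 := by
  rw [AddMonoidAlgebra.coeff_mul, Finsupp.sum, Finset.sum_product]
  rfl

lemma untrop_mul_apply {n : ℕ} (f g : TropLaurent n) (u : Fin n → ℤ) :
    ((f * g).coeff u).untrop = (f.coeff.support ×ˢ g.coeff.support).inf
      (fun p => Tropical.untrop (if p.1 + p.2 = u then f.coeff p.1 * g.coeff p.2 else 0)) := by
  rw [mul_apply_prod, Finset.untrop_sum']
  rfl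

lemma termVal_mul_le {n : ℕ} (f g : TropLaurent n) (w : Fin n → ℝ) (a b : Fin n → ℤ) :
    termVal (f * g) w (a + b) ≤ termVal f w a + termVal g w b := by
  by_cases ha : a ∈ f.coeff.support
  · by_cases hb : b ∈ g.coeff.support
    · have h1 : ((f * g).coeff (a + b)).untrop ≤ (f.coeff a).untrop + (g.coeff b).untrop := by
        rw [untrop_mul_apply]
        have := Finset.inf_le (f := fun p : (Fin n → ℤ) × (Fin n → ℤ) =>
          Tropical.untrop (if p.1 + p.2 = a + b then f.coeff p.1 * g.coeff p.2 else 0))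
          (show (a, b) ∈ f.coeff.support ×ˢ g.coeff.support from Finset.mem_product.2 ⟨ha, hb⟩)
        simpa using this
      calc termVal (f * g) w (a + b)
          = ((f * g).coeff (a + b)).untrop + (((∑ i, ((a+b) i : ℝ) * w i : ℝ)) : WithTop ℝ) := rfl
        _ ≤ ((f.coeff a).untrop + (g.coeff b).untrop) + (((∑ i, ((a+b) i : ℝ) * w i : ℝ)) : WithTop ℝ) :=
            add_le_add_left h1 _
        _ = termVal f w a + termVal g w b := by
            simp only [termVal, inner_add a b w, WithTop.coe_add]; abel
    · rw [termVal_of_not_mem w hb, add_top]; exact le_top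
  · rw [termVal_of_not_mem w ha, top_add]; exact le_top

lemma termVal_mul_cases {n : ℕ} (f g : TropLaurent n) (w : Fin n → ℝ) (u : Fin n → ℤ) :
    termVal (f * g) w u = ⊤ ∨ ∃ a b : Fin n → ℤ, a + b = u ∧
      termVal (f * g) w u = termVal f w a + termVal g w b := by
  by_cases hs : ((f.coeff.support ×ˢ g.coeff.support) : Finset ((Fin n → ℤ) × (Fin n → ℤ))).Nonempty
  · obtain ⟨p, hp, hinf⟩ := Finset.exists_mem_eq_inf _ hs
      (fun p : (Fin n → ℤ) × (Fin n → ℤ) =>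
        Tropical.untrop (if p.1 + p.2 = u then f.coeff p.1 * g.coeff p.2 else 0))
    rw [← untrop_mul_apply] at hinf
    by_cases hc : p.1 + p.2 = u
    · right
      refine ⟨p.1, p.2, hc, ?_⟩
      rw [if_pos hc] at hinf
      have h : (f * g).coeff u = f.coeff p.1 * g.coeff p.2 := Tropical.untrop_injective hinf
      rw [← hc] at h ⊢
      exact termVal_mul_apply f g w p.1 p.2 h
    · left
      rw [if_neg hc, Tropical.untrop_zero] at hinf
      simp [termVal, hinf]
  · left
    rw [Finset.not_nonempty_iff_eq_empty] at hs
    have : (f * g).coeff u = 0 := by rw [mul_apply_prod, hs, Finset.sum_empty]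
    simp [termVal, this]

lemma tropEval_le_termVal {n : ℕ} (f : TropLaurent n) (w : Fin n → ℝ) (u : Fin n → ℤ) :
    tropEval f w ≤ termVal f w u := by
  by_cases h : u ∈ f.coeff.support
  · exact Finset.inf_le h
  · rw [termVal_of_not_mem w h]; exact le_top

lemma tropEval_mul_ge {n : ℕ} (f g : TropLaurent n) (w : Fin n → ℝ) :
    tropEval f w + tropEval g w ≤ tropEval (f * g) w := by
  refine Finset.le_inf fun u hu => ?_
  rcases termVal_mul_cases f g w u with h | ⟨a, b, _, h⟩
  · rw [h]; exact le_top
  · rw [h]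
    exact add_le_add (tropEval_le_termVal f w a) (tropEval_le_termVal g w b)

lemma exists_min {n : ℕ} (f : TropLaurent n) (w : Fin n → ℝ) (h : tropEval f w ≠ ⊤) :
    ∃ a, termVal f w a = tropEval f w := by
  have hne : f.coeff.support.Nonempty := by
    rw [Finset.nonempty_iff_ne_empty]
    intro hc
    exact h (by rw [tropEval, hc, Finset.inf_empty])
  obtain ⟨a, _, ha⟩ := Finset.exists_mem_eq_inf _ hne (termVal f w)
  exact ⟨a, ha.symm⟩

lemma tropV_subset_mul {n : ℕ} (f g : TropLaurent n) : tropV f ⊆ tropV (f * g) := by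
  intro w hw
  by_cases hft : tropEval f w = ⊤
  · left
    refine top_le_iff.1 ?_
    calc (⊤ : WithTop ℝ) = tropEval f w + tropEval g w := by rw [hft, top_add]
      _ ≤ tropEval (f * g) w := tropEval_mul_ge f g w
  by_cases hgt : tropEval g w = ⊤
  · left
    refine top_le_iff.1 ?_
    calc (⊤ : WithTop ℝ) = tropEval f w + tropEval g w := by rw [hgt, add_top]
      _ ≤ tropEval (f * g) w := tropEval_mul_ge f g w
  rcases hw with h | ⟨u, v, huv, hu, hv⟩
  · exact absurd h hft
  obtain ⟨b, hb⟩ := exists_min g w hgt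
  have key : ∀ x, termVal f w x = tropEval f w →
      termVal (f * g) w (x + b) = tropEval (f * g) w := by
    intro x hx
    refine le_antisymm ?_ (tropEval_le_termVal _ w _)
    calc termVal (f * g) w (x + b) ≤ termVal f w x + termVal g w b := termVal_mul_le f g w x b
      _ = tropEval f w + tropEval g w := by rw [hx, hb]
      _ ≤ tropEval (f * g) w := tropEval_mul_ge f g w
  right
  exact ⟨u + b, v + b, fun h => huv (by simpa using add_right_cancel h), key u hu, key v hv⟩

/-- For tropical (Laurent) polynomials `f, g`, the variety of the tropical product
satisfies `V(f ⊙ g) = V(f) ∪ V(g)`. -/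
theorem tropV_mul {n : ℕ} (f g : TropLaurent n) :
    tropV (f * g) = tropV f ∪ tropV g := by
  apply Set.Subset.antisymm
  · intro w hw
    by_contra hnot
    rw [Set.mem_union, not_or] at hnot
    obtain ⟨hf, hg⟩ := hnot
    rw [tropV, Set.mem_setOf_eq, not_or] at hf hg
    obtain ⟨hft, hfu⟩ := hf
    obtain ⟨hgt, hgu⟩ := hg
    push_neg at hfu hgu
    obtain ⟨a, ha⟩ := exists_min f w hft
    obtain ⟨b, hb⟩ := exists_min g w hgt
    have hfa : ∀ x, x ≠ a → tropEval f w < termVal f w x := by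
      intro x hx
      refine lt_of_le_of_ne (tropEval_le_termVal f w x) fun hc => ?_
      exact (hfu x a hx hc.symm) ha
    have hgb : ∀ x, x ≠ b → tropEval g w < termVal g w x := by
      intro x hx
      refine lt_of_le_of_ne (tropEval_le_termVal g w x) fun hc => ?_
      exact (hgu x b hx hc.symm) hb
    have heval : tropEval (f * g) w = tropEval f w + tropEval g w := by
      refine le_antisymm ?_ (tropEval_mul_ge f g w)
      calc tropEval (f * g) w ≤ termVal (f * g) w (a + b) := tropEval_le_termVal _ w _
        _ ≤ termVal f w a + termVal g w b := termVal_mul_le f g w a b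
        _ = tropEval f w + tropEval g w := by rw [ha, hb]
    have hntop : tropEval (f * g) w ≠ ⊤ := by
      rw [heval]
      exact WithTop.add_ne_top.2 ⟨hft, hgt⟩
    have hstrict : ∀ x, x ≠ a + b → tropEval (f * g) w < termVal (f * g) w x := by
      intro x hx
      rcases termVal_mul_cases f g w x with h | ⟨a', b', hab, h⟩
      · rw [h]
        exact lt_top_iff_ne_top.2 hntop
      · rw [h, heval]
        by_cases ha' : a' = a
        · have hb' : b' ≠ b := fun hc => hx (by rw [← hab, ha', hc])
          have h1 : tropEval f w ≤ termVal f w a' := by rw [ha', ha]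
          exact WithTop.add_lt_add_of_le_of_lt hft h1 (hgb b' hb')
        · exact WithTop.add_lt_add_of_lt_of_le hgt (hfa a' ha') (hb ▸ tropEval_le_termVal g w b')
    rcases hw with h | ⟨u, v, huv, hu, hv⟩
    · exact hntop h
    · have : u ≠ a + b ∨ v ≠ a + b := by
        by_contra hc
        push_neg at hc
        exact huv (hc.1.trans hc.2.symm)
      rcases this with h | h
      · exact absurd hu (ne_of_gt (hstrict u h))
      · exact absurd hv (ne_of_gt (hstrict v h))
  · refine Set.union_subset (tropV_subset_mul f g) ?_
    rw [mul_comm]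
    exact tropV_subset_mul g f
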